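/- Let p be a PDB over a finite set T of tuples and E a set of hyperedges over T such that the PDB is consistent w.r.t. E. Let S ⊆ T be a set of tuples such that Int(S, H) = { S ∩ e : e ∈ E } is a matryoshka, where H = (T, E) is the conflict hypergraph. Then p^min(S) = max{0, Σ_{t∈S} p(t) − |S| + 1}. -/

import Mathlib

open Finset

variable {τ : Type*} [Fintype τ] [DecidableEq τ]

/-- An interpretation of a PDB `p`: a probability distribution over possible worlds
(subsets of the set of tuples) whose marginals agree with `p`. -/
def IsInterp (p : τ → ℝ) (Pr : Finset τ → ℝ) : Prop :=
  (∀ w, 0 ≤ Pr w) ∧ (∑ w : Finset τ, Pr w = 1) ∧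
  (∀ t : τ, ∑ w ∈ Finset.univ.filter (fun w => t ∈ w), Pr w = p t)

/-- A model of the PDB `p` w.r.t. the hyperedge set `E`: an interpretation assigning
probability 0 to every world containing some hyperedge of `E`. -/
def IsModel (p : τ → ℝ) (E : Set (Finset τ)) (Pr : Finset τ → ℝ) : Prop :=
  IsInterp p Pr ∧ ∀ w : Finset τ, (∃ e ∈ E, e ⊆ w) → Pr w = 0

/-- The PDB `p` is consistent w.r.t. `E` if a model exists. -/
def Consistent (p : τ → ℝ) (E : Set (Finset τ)) : Prop :=
  ∃ Pr, IsModel p E Pr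

/-- The probability, under `Pr`, that all tuples of `S` co-exist. -/
def coexistProb (Pr : Finset τ → ℝ) (S : Finset τ) : ℝ :=
  ∑ w ∈ Finset.univ.filter (fun w => S ⊆ w), Pr w

/-- A family of sets is a matryoshka if its elements can be arranged in a strictly
increasing chain under inclusion. -/
def IsMatryoshka (F : Set (Finset τ)) : Prop :=
  ∃ l : List (Finset τ), (∀ s, s ∈ F ↔ s ∈ l) ∧ l.Chain' (· ⊂ ·)

section Aux

omit [Fintype τ] [DecidableEq τ] in
lemma matryoshka_comparable {F : Set (Finset τ)} (h : IsMatryoshka F)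
    {a b : Finset τ} (ha : a ∈ F) (hb : b ∈ F) : a ⊆ b ∨ b ⊆ a := by
  obtain ⟨l, hl, hc⟩ := h
  have hpw : l.Pairwise (fun x y : Finset τ => x ⊆ y ∨ y ⊆ x) :=
    (List.isChain_iff_pairwise.mp hc).imp (fun h => Or.inl h.subset)
  rcases eq_or_ne a b with rfl | hne
  · exact Or.inl subset_rfl
  · haveI : Std.Symm (fun x y : Finset τ => x ⊆ y ∨ y ⊆ x) := ⟨fun x y h => h.symm⟩
    exact hpw.forall ((hl a).mp ha) ((hl b).mp hb) hne

lemma sum_not_mem {p : τ → ℝ} {Pr : Finset τ → ℝ} (h : IsInterp p Pr) (t : τ) :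
    ∑ w ∈ Finset.univ.filter (fun w => t ∉ w), Pr w = 1 - p t := by
  have := Finset.sum_filter_add_sum_filter_not Finset.univ (fun w => t ∈ w) Pr
  rw [h.2.2 t, h.2.1] at this
  linarith

lemma sum_card_missing {p : τ → ℝ} {Pr : Finset τ → ℝ} (h : IsInterp p Pr) (S : Finset τ) :
    ∑ w : Finset τ, Pr w * ((S \ w).card : ℝ) = (S.card : ℝ) - ∑ t ∈ S, p t := by
  have key : ∀ w : Finset τ, Pr w * ((S \ w).card : ℝ)
      = ∑ t ∈ S, (if t ∉ w then Pr w else 0) := by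
    intro w
    rw [Finset.sum_ite, Finset.sum_const, Finset.sum_const_zero, add_zero]
    have : S.filter (fun t => t ∉ w) = S \ w := by
      ext x; simp [Finset.mem_sdiff, Finset.mem_filter]
    rw [this, nsmul_eq_mul, mul_comm]
  rw [Finset.sum_congr rfl (fun w _ => key w), Finset.sum_comm]
  have h2 : ∀ t ∈ S, ∑ w : Finset τ, (if t ∉ w then Pr w else 0) = 1 - p t := by
    intro t _
    rw [← Finset.sum_filter]
    exact sum_not_mem h t
  rw [Finset.sum_congr rfl h2, Finset.sum_sub_distrib, Finset.sum_const, nsmul_eq_mul, mul_one]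

lemma sum_not_subset {Pr : Finset τ → ℝ} (h1 : ∑ w : Finset τ, Pr w = 1) (S : Finset τ) :
    ∑ w ∈ Finset.univ.filter (fun w => ¬ S ⊆ w), Pr w = 1 - coexistProb Pr S := by
  have := Finset.sum_filter_add_sum_filter_not Finset.univ (fun w => S ⊆ w) Pr
  rw [h1] at this
  rw [coexistProb] at *
  linarith

lemma coexist_nonneg {Pr : Finset τ → ℝ} (h0 : ∀ w, 0 ≤ Pr w) (S : Finset τ) :
    0 ≤ coexistProb Pr S := Finset.sum_nonneg fun w _ => h0 w

lemma coexist_lower {p : τ → ℝ} {Pr : Finset τ → ℝ} (h : IsInterp p Pr) (S : Finset τ) :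
    (∑ t ∈ S, p t) - (S.card : ℝ) + 1 ≤ coexistProb Pr S := by
  have h1 : ∑ w ∈ Finset.univ.filter (fun w => ¬ S ⊆ w), Pr w
      ≤ ∑ w : Finset τ, Pr w * ((S \ w).card : ℝ) := by
    rw [← Finset.sum_filter_add_sum_filter_not Finset.univ (fun w => ¬ S ⊆ w)
      (fun w => Pr w * ((S \ w).card : ℝ))]
    have hA : ∑ w ∈ Finset.univ.filter (fun w => ¬ S ⊆ w), Pr w
        ≤ ∑ w ∈ Finset.univ.filter (fun w => ¬ S ⊆ w), Pr w * ((S \ w).card : ℝ) := by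
      apply Finset.sum_le_sum
      intro w hw
      simp only [Finset.mem_filter, Finset.mem_univ, true_and] at hw
      have hne : (S \ w).Nonempty := by rwa [Finset.sdiff_nonempty]
      have hc : (1:ℝ) ≤ ((S \ w).card : ℝ) := by
        exact_mod_cast Finset.card_pos.mpr hne
      nlinarith [h.1 w]
    have hB : 0 ≤ ∑ w ∈ Finset.univ.filter (fun w => ¬¬ S ⊆ w), Pr w * ((S \ w).card : ℝ) :=
      Finset.sum_nonneg fun w _ => mul_nonneg (h.1 w) (by positivity)
    linarith
  rw [sum_card_missing h S, sum_not_subset h.2.1 S] at h1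
  linarith

lemma exists_min_model {p : τ → ℝ} {E : Set (Finset τ)} (hcons : Consistent p E) (S : Finset τ) :
    ∃ Pr, IsModel p E Pr ∧ ∀ Q, IsModel p E Q → coexistProb Pr S ≤ coexistProb Q S := by
  set M : Set (Finset τ → ℝ) := {Pr | IsModel p E Pr} with hM
  have hclosed : IsClosed M := by
    have hMeq : M = (⋂ w : Finset τ, {Pr : Finset τ → ℝ | 0 ≤ Pr w}) ∩
        {Pr : Finset τ → ℝ | ∑ w : Finset τ, Pr w = 1} ∩
        (⋂ t : τ, {Pr : Finset τ → ℝ |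
          ∑ w ∈ Finset.univ.filter (fun w => t ∈ w), Pr w = p t}) ∩
        (⋂ w ∈ {w : Finset τ | ∃ e ∈ E, e ⊆ w}, {Pr : Finset τ → ℝ | Pr w = 0}) := by
      ext Pr
      simp only [hM, Set.mem_inter_iff, Set.mem_iInter, Set.mem_setOf_eq, IsModel, IsInterp]
      constructor
      · rintro ⟨⟨h0, h1, h2⟩, h3⟩; exact ⟨⟨⟨h0, h1⟩, h2⟩, fun w hw => h3 w hw⟩
      · rintro ⟨⟨⟨h0, h1⟩, h2⟩, h3⟩; exact ⟨⟨h0, h1, h2⟩, fun w hw => h3 w hw⟩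
    rw [hMeq]
    refine ((IsClosed.inter (IsClosed.inter ?_ ?_) ?_).inter ?_)
    · exact isClosed_iInter fun w => isClosed_le continuous_const (continuous_apply w)
    · exact isClosed_eq (continuous_finset_sum _ fun w _ => continuous_apply w) continuous_const
    · exact isClosed_iInter fun t =>
        isClosed_eq (continuous_finset_sum _ fun w _ => continuous_apply w) continuous_const
    · exact isClosed_biInter fun w _ => isClosed_eq (continuous_apply w) continuous_const
  have hsub : M ⊆ Set.univ.pi (fun _ : Finset τ => Set.Icc (0:ℝ) 1) := by
    intro Pr hPr w _
    refine ⟨hPr.1.1 w, ?_⟩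
    rw [← hPr.1.2.1]
    exact Finset.single_le_sum (fun i _ => hPr.1.1 i) (Finset.mem_univ w)
  have hcompact : IsCompact M :=
    IsCompact.of_isClosed_subset (isCompact_univ_pi fun _ => isCompact_Icc) hclosed hsub
  have hne : M.Nonempty := hcons
  have hcont : ContinuousOn (fun Pr : Finset τ → ℝ => coexistProb Pr S) M :=
    (continuous_finset_sum _ fun w _ => continuous_apply w).continuousOn
  obtain ⟨Pr, hPrM, hmin⟩ := hcompact.exists_isMinOn hne hcont
  exact ⟨Pr, hPrM, fun Q hQ => hmin hQ⟩

lemma exists_world_two_missing {p : τ → ℝ} {Pr : Finset τ → ℝ} (h : IsInterp p Pr)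
    {S : Finset τ} (hgt : (∑ t ∈ S, p t) - (S.card : ℝ) + 1 < coexistProb Pr S) :
    ∃ w0, 0 < Pr w0 ∧ 2 ≤ (S \ w0).card := by
  by_contra hc
  push_neg at hc
  have hle : ∀ w : Finset τ, Pr w * ((S \ w).card : ℝ) ≤ (if ¬ S ⊆ w then Pr w else 0) := by
    intro w
    rcases le_or_gt (Pr w) 0 with hw | hw
    · have h0 : Pr w = 0 := le_antisymm hw (h.1 w)
      simp [h0]
    · have hcard := hc w hw
      by_cases hs : S ⊆ w
      · have : S \ w = ∅ := Finset.sdiff_eq_empty_iff_subset.mpr hs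
        simp [hs, this]
      · have h1 : ((S \ w).card : ℝ) ≤ 1 := by
          exact_mod_cast Nat.lt_succ_iff.mp hcard
        rw [if_pos hs]
        nlinarith
  have hsum := Finset.sum_le_sum (fun w (_ : w ∈ Finset.univ) => hle w)
  rw [sum_card_missing h S, ← Finset.sum_filter, sum_not_subset h.2.1 S] at hsum
  linarith

lemma exists_good_t {E : Set (Finset τ)} {S w0 : Finset τ}
    (hmat : IsMatryoshka {s : Finset τ | ∃ e ∈ E, s = S ∩ e})
    (hfree : ∀ e ∈ E, ¬ e ⊆ w0) (h2 : 2 ≤ (S \ w0).card) :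
    ∃ t u, t ∈ S ∧ u ∈ S ∧ t ≠ u ∧ t ∉ w0 ∧ u ∉ w0 ∧ ∀ e ∈ E, ¬ e ⊆ insert t w0 := by
  obtain ⟨t, ht', u, hu', htu⟩ := Finset.one_lt_card.mp h2
  rw [Finset.mem_sdiff] at ht' hu'
  -- if `insert x w0` contains an edge then `x` is in that edge and its trace
  have key : ∀ x ∈ S, x ∉ w0 → ∀ e ∈ E, e ⊆ insert x w0 → x ∈ S ∩ e := by
    intro x hxS hxw0 e he hsub
    have hxe : x ∈ e := by
      by_contra hxe
      exact hfree e he (fun y hy => by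
        rcases Finset.mem_insert.mp (hsub hy) with rfl | h
        · exact absurd hy hxe
        · exact h)
    exact Finset.mem_inter.mpr ⟨hxS, hxe⟩
  have main : (∀ e ∈ E, ¬ e ⊆ insert t w0) ∨ (∀ e ∈ E, ¬ e ⊆ insert u w0) := by
    by_contra hcon
    push_neg at hcon
    obtain ⟨⟨et, het, hett⟩, ⟨eu, heu, heuu⟩⟩ := hcon
    have hts : t ∈ S ∩ et := key t ht'.1 ht'.2 et het hett
    have hus : u ∈ S ∩ eu := key u hu'.1 hu'.2 eu heu heuu
    have hcmp := matryoshka_comparable hmat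
      (show S ∩ et ∈ _ from ⟨et, het, rfl⟩) (show S ∩ eu ∈ _ from ⟨eu, heu, rfl⟩)
    rcases hcmp with hsub | hsub
    · have : t ∈ insert u w0 := heuu (Finset.mem_inter.mp (hsub hts)).2
      rcases Finset.mem_insert.mp this with rfl | h
      · exact htu rfl
      · exact ht'.2 h
    · have : u ∈ insert t w0 := hett (Finset.mem_inter.mp (hsub hus)).2
      rcases Finset.mem_insert.mp this with rfl | h
      · exact htu rfl
      · exact hu'.2 h
  rcases main with hgood | hgood
  · exact ⟨t, u, ht'.1, hu'.1, htu, ht'.2, hu'.2, hgood⟩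
  · exact ⟨u, t, hu'.1, ht'.1, htu.symm, hu'.2, ht'.2, hgood⟩

end Aux


lemma perturb {p : τ → ℝ} {E : Set (Finset τ)} {Pr : Finset τ → ℝ}
    (hm : IsModel p E Pr) {S w1 w2 : Finset τ} {t u : τ}
    (ht : t ∈ S) (hu : u ∈ S) (htu : t ≠ u)
    (hw1 : S ⊆ w1) (hw1pos : 0 < Pr w1) (hw2pos : 0 < Pr w2)
    (htw2 : t ∉ w2) (huw2 : u ∉ w2)
    (hins : ∀ e ∈ E, ¬ e ⊆ insert t w2) :
    ∃ Pr', IsModel p E Pr' ∧ coexistProb Pr' S < coexistProb Pr S := by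
  set ε := min (Pr w1) (Pr w2) with hεdef
  have hεpos : 0 < ε := lt_min hw1pos hw2pos
  have hε1 : ε ≤ Pr w1 := min_le_left _ _
  have hε2 : ε ≤ Pr w2 := min_le_right _ _
  set a := w1.erase t with ha
  set b := insert t w2 with hb
  have htw1 : t ∈ w1 := hw1 ht
  have huw1 : u ∈ w1 := hw1 hu
  have hta : t ∉ a := Finset.notMem_erase t w1
  have htb : t ∈ b := Finset.mem_insert_self t w2
  have hub : u ∉ b := fun h => by
    rcases Finset.mem_insert.mp h with rfl | h
    · exact htu rfl
    · exact huw2 h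
  have hw1a : w1 ≠ a := fun h => hta (h ▸ htw1)
  have hw1b : w1 ≠ b := fun h => hub (h ▸ huw1)
  have hw1w2 : w1 ≠ w2 := fun h => htw2 (h ▸ htw1)
  have hw2b : w2 ≠ b := fun h => htw2 (h ▸ htb)
  have hab : a ≠ b := fun h => hta (h ▸ htb)
  set Pr' : Finset τ → ℝ := fun w =>
    Pr w + ε * ((if w = a then 1 else 0) + (if w = b then 1 else 0)
      - (if w = w1 then 1 else 0) - (if w = w2 then 1 else 0)) with hPr'
  have expand : ∀ A : Finset (Finset τ), ∑ w ∈ A, Pr' w = (∑ w ∈ A, Pr w)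
      + ε * ((if a ∈ A then (1:ℝ) else 0) + (if b ∈ A then 1 else 0)
        - (if w1 ∈ A then 1 else 0) - (if w2 ∈ A then 1 else 0)) := by
    intro A
    simp only [hPr']
    rw [Finset.sum_add_distrib, ← Finset.mul_sum]
    congr 2
    rw [Finset.sum_sub_distrib, Finset.sum_sub_distrib, Finset.sum_add_distrib]
    simp [Finset.sum_ite_eq']
  have hnonneg : ∀ w, 0 ≤ Pr' w := by
    intro w
    simp only [hPr']
    rcases eq_or_ne w w1 with h1 | h1
    · rw [h1, if_neg hw1a, if_neg hw1b, if_pos rfl, if_neg hw1w2]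
      linarith
    rcases eq_or_ne w w2 with h2 | h2
    · rw [h2, if_neg hw2b, if_neg (Ne.symm hw1w2)]
      rcases eq_or_ne w2 a with h | h
      · rw [if_pos h, if_pos rfl]; linarith [hm.1.1 w2]
      · rw [if_neg h, if_pos rfl]; linarith
    · rw [if_neg h1, if_neg h2]
      have := hm.1.1 w
      split_ifs <;> linarith
  have hsum : ∑ w : Finset τ, Pr' w = 1 := by
    rw [expand Finset.univ]
    simp [hm.1.2.1]
  have hmarg : ∀ t' : τ, ∑ w ∈ Finset.univ.filter (fun w => t' ∈ w), Pr' w = p t' := by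
    intro t'
    rw [expand]
    rcases eq_or_ne t' t with rfl | hne
    · rw [if_neg (by simp [hta]), if_pos (by simp [htb]), if_pos (by simp [htw1]),
        if_neg (by simp [htw2]), hm.1.2.2 t']
      ring
    · have hea : t' ∈ a ↔ t' ∈ w1 := by simp [ha, Finset.mem_erase, hne]
      have heb : t' ∈ b ↔ t' ∈ w2 := by simp [hb, Finset.mem_insert, hne]
      by_cases h1 : t' ∈ w1 <;> by_cases h2 : t' ∈ w2
      · rw [if_pos (by simp [hea.mpr h1]), if_pos (by simp [heb.mpr h2]),
          if_pos (by simp [h1]), if_pos (by simp [h2]), hm.1.2.2 t']; ring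
      · rw [if_pos (by simp [hea.mpr h1]), if_neg (by simp [heb, h2]),
          if_pos (by simp [h1]), if_neg (by simp [h2]), hm.1.2.2 t']; ring
      · rw [if_neg (by simp [hea, h1]), if_pos (by simp [heb.mpr h2]),
          if_neg (by simp [h1]), if_pos (by simp [h2]), hm.1.2.2 t']; ring
      · rw [if_neg (by simp [hea, h1]), if_neg (by simp [heb, h2]),
          if_neg (by simp [h1]), if_neg (by simp [h2]), hm.1.2.2 t']; ring
  have hzero : ∀ w : Finset τ, (∃ e ∈ E, e ⊆ w) → Pr' w = 0 := by
    intro w hw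
    obtain ⟨e, he, hew⟩ := hw
    have h0 : Pr w = 0 := hm.2 w ⟨e, he, hew⟩
    have hna : w ≠ a := fun h =>
      absurd (hm.2 w1 ⟨e, he, (h ▸ hew).trans (Finset.erase_subset t w1)⟩) (ne_of_gt hw1pos)
    have hnb : w ≠ b := fun h => hins e he (h ▸ hew)
    have hn1 : w ≠ w1 := fun h =>
      absurd (hm.2 w1 ⟨e, he, h ▸ hew⟩) (ne_of_gt hw1pos)
    have hn2 : w ≠ w2 := fun h =>
      absurd (hm.2 w2 ⟨e, he, h ▸ hew⟩) (ne_of_gt hw2pos)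
    simp only [hPr', if_neg hna, if_neg hnb, if_neg hn1, if_neg hn2, h0]
    ring
  refine ⟨Pr', ⟨⟨hnonneg, hsum, hmarg⟩, hzero⟩, ?_⟩
  rw [coexistProb, coexistProb, expand]
  have hSa : ¬ S ⊆ a := fun h => hta (h ht)
  have hSb : ¬ S ⊆ b := fun h => hub (h hu)
  have hSw2 : ¬ S ⊆ w2 := fun h => htw2 (h ht)
  rw [if_neg (by simp [hSa]), if_neg (by simp [hSb]), if_pos (by simp [hw1]),
    if_neg (by simp [hSw2])]
  linarith

/-- if `Int(S, H) = { S ∩ e : e ∈ E }` is a matryoshka, then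
`p^min(S) = max {0, Σ_{t∈S} p(t) − |S| + 1}`. -/
theorem pmin_of_matryoshka
    (p : τ → ℝ) (hp : ∀ t, 0 ≤ p t ∧ p t ≤ 1)
    (E : Set (Finset τ)) (hedges : ∀ e ∈ E, e.Nonempty)
    (hcons : Consistent p E)
    (S : Finset τ)
    (hmat : IsMatryoshka {s : Finset τ | ∃ e ∈ E, s = S ∩ e}) :
    IsLeast {x : ℝ | ∃ Pr, IsModel p E Pr ∧ coexistProb Pr S = x}
      (max 0 ((∑ t ∈ S, p t) - (S.card : ℝ) + 1)) := by
  constructor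
  · obtain ⟨Pr, hPr, hmin⟩ := exists_min_model hcons S
    refine ⟨Pr, hPr, ?_⟩
    have hlb : max 0 ((∑ t ∈ S, p t) - (S.card : ℝ) + 1) ≤ coexistProb Pr S :=
      max_le (coexist_nonneg hPr.1.1 S) (coexist_lower hPr.1 S)
    rcases eq_or_lt_of_le hlb with heq | hlt
    · exact heq.symm
    exfalso
    have h0 : 0 < coexistProb Pr S := lt_of_le_of_lt (le_max_left _ _) hlt
    have hX : (∑ t ∈ S, p t) - (S.card : ℝ) + 1 < coexistProb Pr S :=
      lt_of_le_of_lt (le_max_right _ _) hlt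
    have hex : ∃ w1, S ⊆ w1 ∧ 0 < Pr w1 := by
      by_contra hc
      push_neg at hc
      have : coexistProb Pr S ≤ 0 := by
        apply Finset.sum_nonpos
        intro w hw
        simp only [Finset.mem_filter, Finset.mem_univ, true_and] at hw
        exact hc w hw
      linarith
    obtain ⟨w1, hSw1, hw1pos⟩ := hex
    obtain ⟨w0, hw0pos, h2miss⟩ := exists_world_two_missing hPr.1 hX
    have hfree : ∀ e ∈ E, ¬ e ⊆ w0 := fun e he hsub =>
      absurd (hPr.2 w0 ⟨e, he, hsub⟩) (ne_of_gt hw0pos)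
    obtain ⟨t, u, ht, hu, htu, htw0, huw0, hins⟩ :=
      exists_good_t hmat hfree (Finset.one_lt_card.mpr (Finset.one_lt_card.mp h2miss))
    obtain ⟨Pr', hPr', hlt'⟩ := perturb hPr ht hu htu hSw1 hw1pos hw0pos htw0 huw0 hins
    exact absurd (hmin Pr' hPr') (not_le.mpr hlt')
  · rintro x ⟨Pr, hPr, rfl⟩
    exact max_le (coexist_nonneg hPr.1.1 S) (coexist_lower hPr.1 S)
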